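/- arXiv:math/0206239 — 6 statements merged into one kernel-verified Lean document; each statement's English description precedes it below -/
import Mathlib

section
/- Let p > 0, γ > 0 and ρ be real, and let s ∈ ℂ satisfy Re(s) > 0 and ρ + γ·Re(s) > 0. Then the Mellin transform at s of the function z ↦ ∫₀^∞ t^{ρ−1} e^{−p t − z t^{−γ}} dt (defined for z > 0) equals Γ(s) · Γ(ρ + γ s) · p^{−(ρ + γ s)}. -/
open MeasureTheory

private lemma aux_int2 {a b : ℝ} (ha : 0 < a) (hb : 0 < b) :
    IntegrableOn (fun z : ℝ => z ^ (a - 1) * Real.exp (-(b * z))) (Set.Ioi 0) := by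
  have h := integrableOn_rpow_mul_exp_neg_mul_rpow (s := a - 1) (p := 1) (b := b)
    (by linarith) zero_lt_one hb
  refine h.congr_fun (fun x hx => ?_) measurableSet_Ioi
  beta_reduce
  rw [Real.rpow_one, neg_mul]

theorem stmt2 (p γ ρ : ℝ) (hp : 0 < p) (hγ : 0 < γ) (s : ℂ)
    (hs : 0 < s.re) (hρs : 0 < ρ + γ * s.re) :
    mellin (fun z : ℝ =>
        ((∫ t in Set.Ioi (0:ℝ), t ^ (ρ - 1) * Real.exp (-p * t - z * t ^ (-γ)) : ℝ) : ℂ)) s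
      = Complex.Gamma s * Complex.Gamma ((ρ : ℂ) + (γ : ℂ) * s) *
          (p : ℂ) ^ (-((ρ : ℂ) + (γ : ℂ) * s)) := by
  have hres : 0 < ((ρ : ℂ) + (γ : ℂ) * s).re := by simpa using hρs
  set F : ℝ → ℝ → ℂ := fun z t =>
    (z : ℂ) ^ (s - 1) * ((t ^ (ρ - 1) * Real.exp (-p * t - z * t ^ (-γ)) : ℝ) : ℂ) with hFdef
  have hnorm : ∀ z ∈ Set.Ioi (0:ℝ), ∀ t ∈ Set.Ioi (0:ℝ),
      ‖F z t‖ = (t ^ (ρ - 1) * Real.exp (-p * t)) *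
        (z ^ (s.re - 1) * Real.exp (-(t ^ (-γ) * z))) := by
    intro z hz t ht
    have hz' : (0:ℝ) < z := hz
    have ht' : (0:ℝ) < t := ht
    have h1 : ‖(z : ℂ) ^ (s - 1)‖ = z ^ (s.re - 1) := by
      rw [Complex.norm_cpow_eq_rpow_re_of_pos hz', Complex.sub_re,
        Complex.one_re]
    have h2 : Real.exp (-p * t - z * t ^ (-γ)) =
        Real.exp (-p * t) * Real.exp (-(t ^ (-γ) * z)) := by
      rw [← Real.exp_add]; congr 1; ring
    simp only [hFdef, norm_mul, h1, Complex.norm_real, Real.norm_eq_abs, h2, abs_mul,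
      Real.abs_exp, abs_of_pos (Real.rpow_pos_of_pos ht' (ρ - 1))]
    ring
  have hcontz : ∀ t : ℝ, 0 < t → ContinuousOn (fun z : ℝ => F z t) (Set.Ioi 0) := by
    intro t ht
    simp only [hFdef]
    apply ContinuousOn.mul
    · exact fun z hz =>
        (Complex.continuousAt_ofReal_cpow_const z (s - 1) (Or.inr (ne_of_gt hz))).continuousWithinAt
    · exact (Complex.continuous_ofReal.comp
        (continuous_const.mul (Real.continuous_exp.comp (by continuity)))).continuousOn
  have hintz : ∀ t : ℝ, 0 < t → Integrable (fun z => F z t) (volume.restrict (Set.Ioi 0)) := by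
    intro t ht
    have hb : 0 < t ^ (-γ) := Real.rpow_pos_of_pos ht _
    refine Integrable.mono' ((aux_int2 hs hb).const_mul (t ^ (ρ - 1) * Real.exp (-p * t)))
      ((hcontz t ht).aestronglyMeasurable measurableSet_Ioi) ?_
    filter_upwards [ae_restrict_mem measurableSet_Ioi] with z hz
    rw [hnorm z hz t ht]
  have hcontF : ContinuousOn (Function.uncurry F) (Set.Ioi 0 ×ˢ Set.Ioi 0) := by
    have hun : Function.uncurry F = fun q : ℝ × ℝ =>
        (q.1 : ℂ) ^ (s - 1) *
          ((q.2 ^ (ρ - 1) * Real.exp (-p * q.2 - q.1 * q.2 ^ (-γ)) : ℝ) : ℂ) := rfl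
    rw [hun]
    apply ContinuousOn.mul
    · exact fun q hq =>
        ((Complex.continuousAt_ofReal_cpow_const q.1 (s - 1) (Or.inr (ne_of_gt hq.1))).comp
          continuous_fst.continuousAt).continuousWithinAt
    · refine Complex.continuous_ofReal.comp_continuousOn (ContinuousOn.mul ?_ ?_)
      · exact fun q hq =>
          ((Real.continuousAt_rpow_const q.2 (ρ - 1) (Or.inl (ne_of_gt hq.2))).comp
            continuous_snd.continuousAt).continuousWithinAt
      · refine Real.continuous_exp.comp_continuousOn (ContinuousOn.sub
          (continuous_const.mul continuous_snd).continuousOn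
          (ContinuousOn.mul continuous_fst.continuousOn ?_))
        exact fun q hq =>
          ((Real.continuousAt_rpow_const q.2 (-γ) (Or.inl (ne_of_gt hq.2))).comp
            continuous_snd.continuousAt).continuousWithinAt
  have hval : ∀ t : ℝ, 0 < t → (∫ z in Set.Ioi (0:ℝ), ‖F z t‖) =
      Real.Gamma s.re * (t ^ (ρ + γ * s.re - 1) * Real.exp (-(p * t))) := by
    intro t ht
    have hb : 0 < t ^ (-γ) := Real.rpow_pos_of_pos ht _
    rw [setIntegral_congr_fun measurableSet_Ioi (fun z hz => hnorm z hz t ht),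
      MeasureTheory.integral_const_mul, Real.integral_rpow_mul_exp_neg_mul_Ioi hs hb,
      one_div, Real.rpow_neg ht.le, inv_inv, ← Real.rpow_mul ht.le,
      show ρ + γ * s.re - 1 = (ρ - 1) + γ * s.re by ring, Real.rpow_add ht, neg_mul]
    ring
  have hFint : Integrable (Function.uncurry F)
      ((volume.restrict (Set.Ioi 0)).prod (volume.restrict (Set.Ioi 0))) := by
    have hFm : AEStronglyMeasurable (Function.uncurry F)
        ((volume.restrict (Set.Ioi 0)).prod (volume.restrict (Set.Ioi 0))) := by
      rw [Measure.prod_restrict]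
      exact hcontF.aestronglyMeasurable (measurableSet_Ioi.prod measurableSet_Ioi)
    rw [MeasureTheory.integrable_prod_iff' hFm]
    constructor
    · filter_upwards [ae_restrict_mem measurableSet_Ioi] with t ht
      exact hintz t ht
    · refine ((aux_int2 hρs hp).const_mul (Real.Gamma s.re)).congr ?_
      filter_upwards [ae_restrict_mem measurableSet_Ioi] with t ht
      exact (hval t ht).symm
  have htne : ∀ t : ℝ, 0 < t → (t : ℂ) ≠ 0 := fun t ht => Complex.ofReal_ne_zero.mpr ht.ne'
  calc mellin (fun z : ℝ =>
        ((∫ t in Set.Ioi (0:ℝ), t ^ (ρ - 1) * Real.exp (-p * t - z * t ^ (-γ)) : ℝ) : ℂ)) s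
      = ∫ z in Set.Ioi (0:ℝ), ∫ t in Set.Ioi (0:ℝ), F z t := by
        rw [mellin]
        refine setIntegral_congr_fun measurableSet_Ioi (fun z hz => ?_)
        have hco : ((∫ t in Set.Ioi (0:ℝ), t ^ (ρ - 1) * Real.exp (-p * t - z * t ^ (-γ)) : ℝ) : ℂ)
            = ∫ t in Set.Ioi (0:ℝ),
                ((t ^ (ρ - 1) * Real.exp (-p * t - z * t ^ (-γ)) : ℝ) : ℂ) := by
          have := (integral_ofReal (𝕜 := ℂ)
            (f := fun t : ℝ => t ^ (ρ - 1) * Real.exp (-p * t - z * t ^ (-γ)))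
            (μ := volume.restrict (Set.Ioi 0))).symm
          simpa using this
        rw [smul_eq_mul, hco, ← MeasureTheory.integral_const_mul]
    _ = ∫ t in Set.Ioi (0:ℝ), ∫ z in Set.Ioi (0:ℝ), F z t := integral_integral_swap hFint
    _ = ∫ t in Set.Ioi (0:ℝ),
          Complex.Gamma s * ((t : ℂ) ^ ((ρ : ℂ) + (γ : ℂ) * s - 1) *
            Complex.exp (-((p : ℂ) * (t : ℂ)))) := by
        refine setIntegral_congr_fun measurableSet_Ioi (fun t ht => ?_)
        have ht' : (0:ℝ) < t := ht
        have hb : 0 < t ^ (-γ) := Real.rpow_pos_of_pos ht' _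
        have step1 : (∫ z in Set.Ioi (0:ℝ), F z t) =
            ((t ^ (ρ - 1) * Real.exp (-p * t) : ℝ) : ℂ) *
              ∫ z in Set.Ioi (0:ℝ), (z : ℂ) ^ (s - 1) *
                Complex.exp (-(((t ^ (-γ) : ℝ) : ℂ) * (z : ℂ))) := by
          rw [← MeasureTheory.integral_const_mul]
          refine setIntegral_congr_fun measurableSet_Ioi (fun z hz => ?_)
          have h2 : Real.exp (-p * t - z * t ^ (-γ)) =
              Real.exp (-p * t) * Real.exp (-(t ^ (-γ) * z)) := by
            rw [← Real.exp_add]; congr 1; ring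
          simp only [hFdef, h2]
          push_cast
          ring
        have hone : (1 / ((t ^ (-γ) : ℝ) : ℂ)) = ((t ^ γ : ℝ) : ℂ) := by
          rw [one_div, ← Complex.ofReal_inv, Real.rpow_neg ht'.le, inv_inv]
        have hcomb : (t : ℂ) ^ ((ρ : ℂ) + (γ : ℂ) * s - 1) =
            (t : ℂ) ^ (((ρ - 1 : ℝ) : ℂ)) * (t : ℂ) ^ ((γ : ℂ) * s) := by
          rw [← Complex.cpow_add _ _ (htne t ht')]
          congr 1
          push_cast
          ring
        rw [step1, Complex.integral_cpow_mul_exp_neg_mul_Ioi hs hb, hone,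
          ← Complex.cpow_mul_ofReal_nonneg ht'.le γ s, hcomb,
          ← Complex.ofReal_cpow ht'.le]
        push_cast
        ring
    _ = Complex.Gamma s *
          ((1 / (p : ℂ)) ^ ((ρ : ℂ) + (γ : ℂ) * s) * Complex.Gamma ((ρ : ℂ) + (γ : ℂ) * s)) := by
        rw [MeasureTheory.integral_const_mul, Complex.integral_cpow_mul_exp_neg_mul_Ioi hres hp]
    _ = Complex.Gamma s * Complex.Gamma ((ρ : ℂ) + (γ : ℂ) * s) *
          (p : ℂ) ^ (-((ρ : ℂ) + (γ : ℂ) * s)) := by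
        rw [one_div, Complex.inv_cpow _ _ (by
          rw [Complex.arg_ofReal_of_nonneg hp.le]; exact Ne.symm Real.pi_ne_zero),
          ← Complex.cpow_neg]
        ring
end

section
/- Let a > 0, b > 0, z > 0, γ > 0, let 0 < δ < 1, and let ρ be real. Then the depleted non-resonant reaction rate integral admits the absolutely convergent expansion ∫₀^∞ t^ρ e^{−a t − b t^δ − z t^{−γ}} dt = Σ_{k=0}^∞ [(−b)^k / k!] ∫₀^∞ t^{ρ + kδ} e^{−a t − z t^{−γ}} dt. -/
open MeasureTheory Set

lemma expneg_le (n : ℕ) {x : ℝ} (hx : 0 < x) : Real.exp (-x) ≤ (n.factorial : ℝ) / x ^ n := by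
  have h1 : x ^ n / (n.factorial : ℝ) ≤ Real.exp x := Real.pow_div_factorial_le_exp x hx.le n
  have h2 : (0:ℝ) < x ^ n / (n.factorial : ℝ) := by positivity
  rw [Real.exp_neg]
  calc (Real.exp x)⁻¹ ≤ (x ^ n / (n.factorial : ℝ))⁻¹ := by
        exact inv_anti₀ h2 h1
    _ = (n.factorial : ℝ) / x ^ n := by rw [inv_div]

lemma bounded_aux {z γ : ℝ} (hz : 0 < z) (hγ : 0 < γ) (s : ℝ) {c : ℝ} (hc : 0 < c) :
    ∃ M : ℝ, ∀ t ∈ Ioi (0:ℝ),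
      t ^ s * Real.exp (-c * t - z * t ^ (-γ)) ≤ M * Real.exp (-(c/2) * t) := by
  set n : ℕ := ⌈-s / γ⌉₊ with hn
  set m : ℕ := ⌈s⌉₊ with hm
  refine ⟨max ((n.factorial : ℝ) / z ^ n) ((m.factorial : ℝ) * (2 / c) ^ m), fun t ht => ?_⟩
  have ht0 : (0:ℝ) < t := ht
  have key : t ^ s * Real.exp (-(c/2) * t - z * t ^ (-γ)) ≤
      max ((n.factorial : ℝ) / z ^ n) ((m.factorial : ℝ) * (2 / c) ^ m) := by
    rcases le_or_gt t 1 with h1 | h1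
    · refine le_trans ?_ (le_max_left _ _)
      have hx : (0:ℝ) < z * t ^ (-γ) := by positivity
      have e1 : Real.exp (-(c/2) * t - z * t ^ (-γ)) ≤ Real.exp (-(z * t ^ (-γ))) := by
        apply Real.exp_le_exp.2; nlinarith
      have e2 : Real.exp (-(z * t ^ (-γ))) ≤ (n.factorial : ℝ) / (z * t ^ (-γ)) ^ n := expneg_le n hx
      have e3 : ((z * t ^ (-γ)) : ℝ) ^ n = z ^ n * t ^ (-γ * n) := by
        rw [mul_pow, ← Real.rpow_natCast (t ^ (-γ)) n, ← Real.rpow_mul ht0.le]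
      have e4 : t ^ s * ((n.factorial : ℝ) / (z * t ^ (-γ)) ^ n) = ((n.factorial : ℝ) / z ^ n) * t ^ (s + γ * n) := by
        have hp : (0:ℝ) < t ^ (γ * (n:ℝ)) := Real.rpow_pos_of_pos ht0 _
        rw [e3, show (-γ * (n:ℝ)) = -(γ * (n:ℝ)) by ring, Real.rpow_neg ht0.le,
          Real.rpow_add ht0]
        field_simp
      have e5 : t ^ (s + γ * n) ≤ 1 := by
        apply Real.rpow_le_one ht0.le h1
        have h' : -s / γ ≤ (n:ℝ) := Nat.le_ceil _
        have := (div_le_iff₀ hγ).mp h'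
        nlinarith
      calc t ^ s * Real.exp (-(c/2) * t - z * t ^ (-γ))
          ≤ t ^ s * ((n.factorial : ℝ) / (z * t ^ (-γ)) ^ n) := by
            apply mul_le_mul_of_nonneg_left (e1.trans e2) (Real.rpow_nonneg ht0.le s)
        _ = ((n.factorial : ℝ) / z ^ n) * t ^ (s + γ * n) := e4
        _ ≤ ((n.factorial : ℝ) / z ^ n) * 1 := by
            apply mul_le_mul_of_nonneg_left e5 (by positivity)
        _ = (n.factorial : ℝ) / z ^ n := mul_one _
    · refine le_trans ?_ (le_max_right _ _)
      have hx : (0:ℝ) < c / 2 * t := by positivity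
      have e1 : Real.exp (-(c/2) * t - z * t ^ (-γ)) ≤ Real.exp (-(c/2 * t)) := by
        apply Real.exp_le_exp.2
        have : (0:ℝ) < z * t ^ (-γ) := by positivity
        nlinarith
      have e2 : Real.exp (-(c/2 * t)) ≤ (m.factorial : ℝ) / (c/2 * t) ^ m := expneg_le m hx
      have e3 : t ^ s * ((m.factorial : ℝ) / (c/2 * t) ^ m) = (m.factorial : ℝ) * (2/c) ^ m * t ^ (s - m) := by
        rw [mul_pow, ← Real.rpow_natCast t m, Real.rpow_sub ht0]
        field_simp
        ring
        rw [← mul_pow, mul_inv_cancel₀ hc.ne', one_pow, one_mul, ← mul_pow]; norm_num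
      have e5 : t ^ (s - m) ≤ 1 := by
        apply Real.rpow_le_one_of_one_le_of_nonpos h1.le
        have : s ≤ (m:ℝ) := Nat.le_ceil _
        linarith
      calc t ^ s * Real.exp (-(c/2) * t - z * t ^ (-γ))
          ≤ t ^ s * ((m.factorial : ℝ) / (c/2 * t) ^ m) := by
            apply mul_le_mul_of_nonneg_left (e1.trans e2) (Real.rpow_nonneg ht0.le s)
        _ = (m.factorial : ℝ) * (2/c) ^ m * t ^ (s - m) := e3
        _ ≤ (m.factorial : ℝ) * (2/c) ^ m * 1 := by
            apply mul_le_mul_of_nonneg_left e5 (by positivity)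
        _ = (m.factorial : ℝ) * (2/c) ^ m := mul_one _
  calc t ^ s * Real.exp (-c * t - z * t ^ (-γ))
      = (t ^ s * Real.exp (-(c/2) * t - z * t ^ (-γ))) * Real.exp (-(c/2) * t) := by
        rw [mul_assoc, ← Real.exp_add]; ring_nf
    _ ≤ _ := by
        apply mul_le_mul_of_nonneg_right key (Real.exp_nonneg _)

lemma integrable_aux {z γ : ℝ} (hz : 0 < z) (hγ : 0 < γ) (s : ℝ) {c : ℝ} (hc : 0 < c) :
    IntegrableOn (fun t : ℝ => t ^ s * Real.exp (-c * t - z * t ^ (-γ))) (Ioi 0) := by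
  obtain ⟨M, hM⟩ := bounded_aux hz hγ s hc
  have hmeas : AEStronglyMeasurable (fun t : ℝ => t ^ s * Real.exp (-c * t - z * t ^ (-γ)))
      (volume.restrict (Ioi (0:ℝ))) := by
    apply ContinuousOn.aestronglyMeasurable _ measurableSet_Ioi
    apply ContinuousOn.mul
    · exact fun t ht => (Real.continuousAt_rpow_const t s (Or.inl (ne_of_gt ht))).continuousWithinAt
    · apply Real.continuous_exp.comp_continuousOn
      apply ContinuousOn.sub
      · exact (continuous_const.mul continuous_id).continuousOn
      · exact continuousOn_const.mul (fun t ht =>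
          (Real.continuousAt_rpow_const t (-γ) (Or.inl (ne_of_gt ht))).continuousWithinAt)
  apply Integrable.mono' ((exp_neg_integrableOn_Ioi 0 (half_pos hc)).const_mul M) hmeas
  filter_upwards [ae_restrict_mem measurableSet_Ioi] with t ht
  have ht0 : (0:ℝ) < t := ht
  rw [Real.norm_of_nonneg (by positivity)]
  exact hM t ht

lemma young_aux {δ ε : ℝ} (hδ₀ : 0 < δ) (hδ₁ : δ < 1) (hε : 0 < ε) :
    ∃ C : ℝ, 0 ≤ C ∧ ∀ t : ℝ, 0 < t → t ^ δ ≤ C + ε * t := by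
  have h1δ : 0 < 1 - δ := by linarith
  set T : ℝ := max 1 ((1/ε) ^ (1/(1-δ))) with hT
  have hT1 : (1:ℝ) ≤ T := le_max_left _ _
  have hT0 : (0:ℝ) ≤ T := by linarith
  refine ⟨T ^ δ, Real.rpow_nonneg hT0 δ, fun t ht => ?_⟩
  rcases le_or_gt t T with h | h
  · have h2 : t ^ δ ≤ T ^ δ := Real.rpow_le_rpow ht.le h hδ₀.le
    nlinarith [mul_pos hε ht]
  · have h1 : (1:ℝ) ≤ t := hT1.trans h.le
    have h2 : (1/ε) ≤ t ^ (1-δ) := by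
      have h3 := Real.rpow_le_rpow (Real.rpow_nonneg (by positivity : (0:ℝ) ≤ 1/ε) _)
        ((le_max_right _ _).trans h.le) h1δ.le
      rwa [← Real.rpow_mul (by positivity : (0:ℝ) ≤ 1/ε),
        one_div_mul_cancel (ne_of_gt h1δ), Real.rpow_one] at h3
    have h3 : t ^ δ * (1/ε) ≤ t := by
      calc t ^ δ * (1/ε) ≤ t ^ δ * t ^ (1-δ) :=
            mul_le_mul_of_nonneg_left h2 (Real.rpow_nonneg ht.le _)
        _ = t := by rw [← Real.rpow_add ht]; norm_num
    have h4 := mul_le_mul_of_nonneg_left h3 hε.le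
    rw [show ε * (t ^ δ * (1/ε)) = t ^ δ by field_simp] at h4
    nlinarith [Real.rpow_nonneg hT0 δ]

theorem stmt7 (a b z γ δ ρ : ℝ) (ha : 0 < a) (hb : 0 < b) (hz : 0 < z) (hγ : 0 < γ)
    (hδ₀ : 0 < δ) (hδ₁ : δ < 1) :
    (Summable fun k : ℕ => |(-b) ^ k / (k.factorial : ℝ) *
        ∫ t in Set.Ioi (0:ℝ), t ^ (ρ + k * δ) * Real.exp (-a * t - z * t ^ (-γ))|) ∧
    ∫ t in Set.Ioi (0:ℝ), t ^ ρ * Real.exp (-a * t - b * t ^ δ - z * t ^ (-γ))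
      = ∑' k : ℕ, (-b) ^ k / (k.factorial : ℝ) *
          ∫ t in Set.Ioi (0:ℝ), t ^ (ρ + k * δ) * Real.exp (-a * t - z * t ^ (-γ)) := by
  have hgint : ∀ k : ℕ, IntegrableOn (fun t : ℝ => (-b) ^ k / (k.factorial : ℝ) *
      (t ^ (ρ + k * δ) * Real.exp (-a * t - z * t ^ (-γ)))) (Ioi 0) := fun k =>
    (integrable_aux hz hγ (ρ + k * δ) ha).const_mul _
  have hpow : ∀ (t : ℝ), 0 < t → ∀ k : ℕ, (t ^ δ) ^ k * t ^ ρ = t ^ (ρ + k * δ) := by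
    intro t ht k
    rw [← Real.rpow_natCast (t ^ δ) k, ← Real.rpow_mul ht.le, Real.rpow_add ht,
      mul_comm δ (k:ℝ)]
    exact mul_comm _ _
  have hhs : ∀ t ∈ Ioi (0:ℝ), HasSum (fun k : ℕ => (-b) ^ k / (k.factorial : ℝ) *
      (t ^ (ρ + k * δ) * Real.exp (-a * t - z * t ^ (-γ))))
      (t ^ ρ * Real.exp (-a * t - b * t ^ δ - z * t ^ (-γ))) := by
    intro t ht
    have ht0 : (0:ℝ) < t := ht
    have h0 : HasSum (fun k : ℕ => (-(b * t ^ δ)) ^ k / (k.factorial : ℝ))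
        (Real.exp (-(b * t ^ δ))) := by
      rw [Real.exp_eq_exp_ℝ]
      exact NormedSpace.expSeries_div_hasSum_exp _
    have h1 := h0.mul_right (t ^ ρ * Real.exp (-a * t - z * t ^ (-γ)))
    have hfun : (fun k : ℕ => (-(b * t ^ δ)) ^ k / (k.factorial : ℝ) *
        (t ^ ρ * Real.exp (-a * t - z * t ^ (-γ)))) = fun k : ℕ =>
        (-b) ^ k / (k.factorial : ℝ) * (t ^ (ρ + k * δ) * Real.exp (-a * t - z * t ^ (-γ))) := by
      funext k
      rw [show (-(b * t ^ δ)) = (-b) * (t ^ δ) by ring, mul_pow, ← hpow t ht0 k]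
      ring
    have hsum : Real.exp (-(b * t ^ δ)) * (t ^ ρ * Real.exp (-a * t - z * t ^ (-γ))) =
        t ^ ρ * Real.exp (-a * t - b * t ^ δ - z * t ^ (-γ)) := by
      rw [mul_left_comm, ← Real.exp_add]
      congr 2
      ring
    rw [hfun, hsum] at h1
    exact h1
  have habs : ∀ t ∈ Ioi (0:ℝ), HasSum (fun k : ℕ => b ^ k / (k.factorial : ℝ) *
      (t ^ (ρ + k * δ) * Real.exp (-a * t - z * t ^ (-γ))))
      (Real.exp (b * t ^ δ) * (t ^ ρ * Real.exp (-a * t - z * t ^ (-γ)))) := by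
    intro t ht
    have ht0 : (0:ℝ) < t := ht
    have h0 : HasSum (fun k : ℕ => (b * t ^ δ) ^ k / (k.factorial : ℝ))
        (Real.exp (b * t ^ δ)) := by
      rw [Real.exp_eq_exp_ℝ]
      exact NormedSpace.expSeries_div_hasSum_exp _
    have h1 := h0.mul_right (t ^ ρ * Real.exp (-a * t - z * t ^ (-γ)))
    have hfun : (fun k : ℕ => (b * t ^ δ) ^ k / (k.factorial : ℝ) *
        (t ^ ρ * Real.exp (-a * t - z * t ^ (-γ)))) = fun k : ℕ =>
        b ^ k / (k.factorial : ℝ) * (t ^ (ρ + k * δ) * Real.exp (-a * t - z * t ^ (-γ))) := by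
      funext k
      rw [mul_pow, ← hpow t ht0 k]
      ring
    rw [hfun] at h1
    exact h1
  have hnorm_eq : ∀ (k : ℕ) (t : ℝ), 0 < t →
      ‖(-b) ^ k / (k.factorial : ℝ) * (t ^ (ρ + k * δ) * Real.exp (-a * t - z * t ^ (-γ)))‖ =
      b ^ k / (k.factorial : ℝ) * (t ^ (ρ + k * δ) * Real.exp (-a * t - z * t ^ (-γ))) := by
    intro k t ht
    rw [Real.norm_eq_abs, abs_mul, abs_div, abs_pow, abs_neg, abs_of_pos hb, Nat.abs_cast,
      abs_of_pos (by positivity)]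
  obtain ⟨C, hC0, hCle⟩ := young_aux hδ₀ hδ₁ (show (0:ℝ) < a/(2*b) by positivity)
  have hhint : IntegrableOn (fun t : ℝ => Real.exp (b * C) *
      (t ^ ρ * Real.exp (-(a/2) * t - z * t ^ (-γ)))) (Ioi 0) :=
    (integrable_aux hz hγ ρ (half_pos ha)).const_mul _
  have hdom : ∀ t ∈ Ioi (0:ℝ),
      Real.exp (b * t ^ δ) * (t ^ ρ * Real.exp (-a * t - z * t ^ (-γ))) ≤
      Real.exp (b * C) * (t ^ ρ * Real.exp (-(a/2) * t - z * t ^ (-γ))) := by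
    intro t ht
    have ht0 : (0:ℝ) < t := ht
    have hmul := mul_le_mul_of_nonneg_left (hCle t ht0) hb.le
    have e : b * (C + a / (2*b) * t) = b * C + a/2 * t := by field_simp
    rw [e] at hmul
    calc Real.exp (b * t ^ δ) * (t ^ ρ * Real.exp (-a * t - z * t ^ (-γ)))
        = t ^ ρ * Real.exp (b * t ^ δ + (-a * t - z * t ^ (-γ))) := by
          rw [mul_left_comm, ← Real.exp_add]
      _ ≤ t ^ ρ * Real.exp (b * C + (-(a/2) * t - z * t ^ (-γ))) := by
          apply mul_le_mul_of_nonneg_left (Real.exp_le_exp.2 (by linarith))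
            (Real.rpow_nonneg ht0.le ρ)
      _ = Real.exp (b * C) * (t ^ ρ * Real.exp (-(a/2) * t - z * t ^ (-γ))) := by
          rw [Real.exp_add]; ring
  have hsummable : Summable fun k : ℕ => ∫ t in Ioi (0:ℝ),
      ‖(-b) ^ k / (k.factorial : ℝ) * (t ^ (ρ + k * δ) * Real.exp (-a * t - z * t ^ (-γ)))‖ := by
    apply summable_of_sum_range_le (c := ∫ t in Ioi (0:ℝ), Real.exp (b * C) *
      (t ^ ρ * Real.exp (-(a/2) * t - z * t ^ (-γ))))
    · exact fun k => integral_nonneg fun t => norm_nonneg _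
    · intro n
      rw [← integral_finset_sum _ (fun k _ => (hgint k).norm)]
      apply setIntegral_mono_on (integrable_finset_sum _ fun k _ => (hgint k).norm) hhint
        measurableSet_Ioi
      intro t ht
      have ht0 : (0:ℝ) < t := ht
      calc ∑ k ∈ Finset.range n,
            ‖(-b) ^ k / (k.factorial : ℝ) * (t ^ (ρ + k * δ) * Real.exp (-a * t - z * t ^ (-γ)))‖
          = ∑ k ∈ Finset.range n,
            b ^ k / (k.factorial : ℝ) * (t ^ (ρ + k * δ) * Real.exp (-a * t - z * t ^ (-γ))) :=
            Finset.sum_congr rfl fun k _ => hnorm_eq k t ht0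
        _ ≤ Real.exp (b * t ^ δ) * (t ^ ρ * Real.exp (-a * t - z * t ^ (-γ))) :=
            sum_le_hasSum _ (fun k _ => by positivity) (habs t ht)
        _ ≤ _ := hdom t ht
  have hkey := hasSum_integral_of_summable_integral_norm hgint hsummable
  have hcongr : (∫ t in Ioi (0:ℝ), ∑' k : ℕ, (-b) ^ k / (k.factorial : ℝ) *
      (t ^ (ρ + k * δ) * Real.exp (-a * t - z * t ^ (-γ)))) =
      ∫ t in Ioi (0:ℝ), t ^ ρ * Real.exp (-a * t - b * t ^ δ - z * t ^ (-γ)) :=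
    setIntegral_congr_fun measurableSet_Ioi fun t ht => (hhs t ht).tsum_eq
  have hsplit : ∀ k : ℕ, (∫ t in Ioi (0:ℝ), (-b) ^ k / (k.factorial : ℝ) *
      (t ^ (ρ + k * δ) * Real.exp (-a * t - z * t ^ (-γ)))) =
      (-b) ^ k / (k.factorial : ℝ) *
      ∫ t in Ioi (0:ℝ), t ^ (ρ + k * δ) * Real.exp (-a * t - z * t ^ (-γ)) := fun k =>
    integral_const_mul _ _
  constructor
  · refine hsummable.congr fun k => ?_
    have hI : (0:ℝ) ≤ ∫ t in Ioi (0:ℝ), t ^ (ρ + k * δ) * Real.exp (-a * t - z * t ^ (-γ)) :=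
      setIntegral_nonneg measurableSet_Ioi fun t ht => by
        have ht0 : (0:ℝ) < t := ht; positivity
    have e1 : (∫ t in Ioi (0:ℝ),
        ‖(-b) ^ k / (k.factorial : ℝ) * (t ^ (ρ + k * δ) * Real.exp (-a * t - z * t ^ (-γ)))‖) =
        b ^ k / (k.factorial : ℝ) *
        ∫ t in Ioi (0:ℝ), t ^ (ρ + k * δ) * Real.exp (-a * t - z * t ^ (-γ)) := by
      rw [setIntegral_congr_fun measurableSet_Ioi fun t ht => hnorm_eq k t ht, integral_const_mul _ _]
    rw [e1, abs_mul, abs_of_nonneg hI, abs_div, abs_pow, abs_neg, abs_of_pos hb, Nat.abs_cast]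
  · rw [← hcongr, ← hkey.tsum_eq]
    exact tsum_congr hsplit
end

section
/- For every fixed real ν, as z → +∞ one has the asymptotic equivalence ∫₀^∞ y^ν e^{−y − z y^{−1/2}} dy ∼ 2 (π/3)^{1/2} (z²/4)^{(2ν+1)/6} e^{−3 (z²/4)^{1/3}}. -/
open MeasureTheory Filter Asymptotics Real Topology
set_option maxHeartbeats 1000000

noncomputable def Hfun (ν t s : ℝ) : ℝ :=
  2 * ((s + Real.sqrt t) / Real.sqrt t) ^ (2*ν+1) *
    Real.exp (-(s^2 * (s + 3*Real.sqrt t) / (s + Real.sqrt t)))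

lemma image_shift_sq (r : ℝ) (hr : 0 < r) :
    (fun x : ℝ => (x + r)^2) '' Set.Ioi (-r) = Set.Ioi (0:ℝ) := by
  ext y
  simp only [Set.mem_image, Set.mem_Ioi]
  constructor
  · rintro ⟨x, hx, rfl⟩
    have : 0 < x + r := by linarith
    positivity
  · intro hy
    refine ⟨Real.sqrt y - r, ?_, ?_⟩
    · have := Real.sqrt_pos.mpr hy
      linarith
    · rw [sub_add_cancel, Real.sq_sqrt hy.le]

lemma subst_eq (ν t : ℝ) (ht : 0 < t) :
    ∫ y in Set.Ioi (0:ℝ), y ^ ν * Real.exp (-y - (2*t*Real.sqrt t) * y ^ (-(1:ℝ)/2))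
      = t ^ (ν + 1/2) * Real.exp (-(3*t)) * ∫ s in Set.Ioi (-Real.sqrt t), Hfun ν t s := by
  set r := Real.sqrt t with hrdef
  have hr : 0 < r := Real.sqrt_pos.mpr ht
  have htr : t = r^2 := (Real.sq_sqrt ht.le).symm
  have hderiv : ∀ x ∈ Set.Ioi (-r),
      HasDerivWithinAt (fun x : ℝ => (x + r)^2) (2*(x+r)) (Set.Ioi (-r)) x := by
    intro x _
    have h := ((hasDerivAt_id x).add_const r).pow 2
    exact h.hasDerivWithinAt.congr_deriv (by simp)
  have hinj : Set.InjOn (fun x : ℝ => (x + r)^2) (Set.Ioi (-r)) := by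
    intro a ha b hb h
    simp only [Set.mem_Ioi] at ha hb
    simp only at h
    nlinarith [sq_nonneg (a - b)]
  rw [← image_shift_sq r hr,
    integral_image_eq_integral_abs_deriv_smul measurableSet_Ioi hderiv hinj,
    ← integral_const_mul]
  apply setIntegral_congr_fun measurableSet_Ioi
  intro x hx
  simp only [Set.mem_Ioi] at hx
  have hw : 0 < x + r := by linarith
  have hBpos : (0:ℝ) < t ^ (ν + 1/2) := Real.rpow_pos_of_pos ht _
  -- rewrite rpow of square
  have h1 : ((x+r)^2 : ℝ) ^ ν = (x+r) ^ (2*ν) := by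
    rw [← Real.rpow_natCast (x+r) 2, ← Real.rpow_mul hw.le]
    norm_num
  have h2 : ((x+r)^2 : ℝ) ^ (-(1:ℝ)/2) = (x+r)⁻¹ := by
    rw [← Real.rpow_natCast (x+r) 2, ← Real.rpow_mul hw.le]
    norm_num [Real.rpow_neg_one]
  have h3 : ((x + r)/r) ^ (2*ν+1) = (x+r)^(2*ν) * (x+r) / t ^ (ν + 1/2) := by
    rw [Real.div_rpow hw.le hr.le, Real.rpow_add hw, Real.rpow_one, hrdef,
      Real.sqrt_eq_rpow, ← Real.rpow_mul ht.le]
    norm_num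
    rw [show (1:ℝ)/2 * (2*ν+1) = ν + 1/2 by ring]
  have hexp : Real.exp (-(x+r)^2 - (2*t*r) * (x+r)⁻¹)
      = Real.exp (-(3*t)) * Real.exp (-(x^2 * (x + 3*r) / (x + r))) := by
    rw [← Real.exp_add]
    congr 1
    rw [htr]
    field_simp
    ring
  simp only [smul_eq_mul, Hfun, ← hrdef]
  rw [h1, h2, h3, abs_of_pos (by linarith : (0:ℝ) < 2*(x+r)), hexp]
  field_simp

lemma core_bound (ν m M t r s : ℝ) (hm0 : 0 ≤ m) (hm1 : -(2*ν+1) ≤ m)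
    (hM0 : 0 ≤ M) (hM1 : 2*ν+1 ≤ M) (hr1 : 1 ≤ r) (htr : t = r^2) (htm : 2*m ≤ t)
    (hs : -r < s) :
    |2 * ((s + r) / r) ^ (2*ν+1) * Real.exp (-(s^2 * (s + 3*r) / (s + r)))|
      ≤ (2 * 2 ^ m * Real.exp (M^2/2)) * Real.exp (-(1/2) * s^2) := by
  have hr : 0 < r := by linarith
  have hw : 0 < s + r := by linarith
  obtain ⟨v, hvdef⟩ : ∃ v, v = (s + r)/r := ⟨_, rfl⟩
  have hv : 0 < v := hvdef ▸ div_pos hw hr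
  have h2m : (1:ℝ) ≤ 2 ^ m := by
    calc (1:ℝ) = 2 ^ (0:ℝ) := (Real.rpow_zero 2).symm
    _ ≤ 2 ^ m := Real.rpow_le_rpow_of_exponent_le one_le_two hm0
  have hexp1 : (1:ℝ) ≤ Real.exp (M^2/2) := Real.one_le_exp (by positivity)
  have hsplit : s^2 * (s + 3*r)/(s + r) = s^2 + 2*s^2/v := by
    rw [hvdef]; field_simp; ring
  have habs : |2 * ((s + r) / r) ^ (2*ν+1) * Real.exp (-(s^2 * (s + 3*r) / (s + r)))|
      = 2 * v ^ (2*ν+1) * (Real.exp (-s^2) * Real.exp (-(2*s^2/v))) := by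
    have hnn : 0 ≤ ((s+r)/r) ^ (2*ν+1) := Real.rpow_nonneg (div_nonneg hw.le hr.le) _
    rw [abs_of_nonneg (by positivity), hsplit, neg_add, Real.exp_add, hvdef]
  have key : v ^ (2*ν+1) * Real.exp (-(2*s^2/v)) * Real.exp (-(1/2) * s^2)
      ≤ 2^m * Real.exp (M^2/2) := by
    rcases le_or_gt 0 s with hs0 | hs0
    · have hv1 : 1 ≤ v := hvdef ▸ (le_div_iff₀ hr).mpr (by linarith)
      have e1 : v ^ (2*ν+1) ≤ v ^ M := Real.rpow_le_rpow_of_exponent_le hv1 hM1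
      have e2 : v ^ M ≤ Real.exp (M * s) := by
        rw [Real.rpow_def_of_pos hv]
        apply Real.exp_le_exp.mpr
        have hlog : Real.log v ≤ v - 1 := Real.log_le_sub_one_of_pos hv
        have hv2 : v - 1 ≤ s := by
          have hv3 : v - 1 = s / r := by rw [hvdef]; field_simp; ring
          rw [hv3]; exact div_le_self hs0 hr1
        nlinarith
      calc v ^ (2*ν+1) * Real.exp (-(2*s^2/v)) * Real.exp (-(1/2) * s^2)
          ≤ Real.exp (M*s) * Real.exp (-(2*s^2/v)) * Real.exp (-(1/2) * s^2) := by
            gcongr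
            exact e1.trans e2
        _ = Real.exp (M*s + -(2*s^2/v) + -(1/2)*s^2) := by rw [← Real.exp_add, ← Real.exp_add]
        _ ≤ Real.exp (M^2/2) := by
            apply Real.exp_le_exp.mpr
            have h1 : 0 ≤ 2*s^2/v := by positivity
            nlinarith [sq_nonneg (M - s)]
        _ ≤ 2^m * Real.exp (M^2/2) := le_mul_of_one_le_left (Real.exp_pos _).le h2m
    · have hv1 : v < 1 := hvdef ▸ (div_lt_one hr).mpr (by linarith)
      have e1 : v ^ (2*ν+1) ≤ v ^ (-m) :=
        Real.rpow_le_rpow_of_exponent_ge hv hv1.le (by linarith)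
      have key2 : v ^ (-m) * Real.exp (-(2*s^2/v)) ≤ 2^m := by
        rcases le_or_gt (1/2 : ℝ) v with hv2 | hv2
        · have e2 : v ^ (-m) ≤ ((1:ℝ)/2) ^ (-m) :=
            Real.rpow_le_rpow_of_nonpos (by norm_num) hv2 (neg_nonpos.mpr hm0)
          have e3 : ((1:ℝ)/2) ^ (-m) = 2 ^ m := by
            rw [one_div, Real.rpow_neg (by norm_num), Real.inv_rpow (by norm_num), inv_inv]
          calc v ^ (-m) * Real.exp (-(2*s^2/v)) ≤ ((1:ℝ)/2) ^ (-m) * 1 := by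
                gcongr
                exact Real.exp_le_one_iff.mpr (neg_nonpos.mpr (by positivity))
            _ = 2 ^ m := by rw [e3, mul_one]
        · have hsv : s = (v - 1) * r := by rw [hvdef]; field_simp; ring
          have h14 : (1/4:ℝ) ≤ (v-1)^2 := by nlinarith
          have hs2 : t/4 ≤ s^2 := by
            rw [hsv, htr]
            nlinarith [mul_le_mul_of_nonneg_right h14 (sq_nonneg r)]
          have hlogv : -Real.log v ≤ v⁻¹ := by
            have h1 : Real.log v⁻¹ ≤ v⁻¹ - 1 := Real.log_le_sub_one_of_pos (by positivity)
            rw [Real.log_inv] at h1; linarith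
          have harg : Real.log v * (-m) + -(2*s^2/v) ≤ 0 := by
            have h2 : Real.log v * (-m) ≤ m * v⁻¹ := by
              have := mul_le_mul_of_nonneg_left hlogv hm0
              linarith [this]
            have h3 : (t/2) * v⁻¹ ≤ 2*s^2/v := by
              rw [div_eq_mul_inv (2*s^2) v]
              gcongr
              linarith
            have h4 : m * v⁻¹ ≤ (t/2) * v⁻¹ :=
              mul_le_mul_of_nonneg_right (by linarith) (by positivity)
            linarith
          calc v ^ (-m) * Real.exp (-(2*s^2/v))
              = Real.exp (Real.log v * (-m) + -(2*s^2/v)) := by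
                rw [Real.exp_add, Real.rpow_def_of_pos hv]
            _ ≤ 1 := Real.exp_le_one_iff.mpr harg
            _ ≤ 2^m := h2m
      calc v ^ (2*ν+1) * Real.exp (-(2*s^2/v)) * Real.exp (-(1/2) * s^2)
          ≤ v ^ (-m) * Real.exp (-(2*s^2/v)) * 1 := by
            have e4 : Real.exp (-(1/2) * s^2) ≤ 1 :=
              Real.exp_le_one_iff.mpr (by nlinarith [sq_nonneg s])
            have e5 : v ^ (2*ν+1) * Real.exp (-(2*s^2/v))
                ≤ v ^ (-m) * Real.exp (-(2*s^2/v)) :=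
              mul_le_mul_of_nonneg_right e1 (Real.exp_pos _).le
            have e6 : 0 ≤ v ^ (2*ν+1) * Real.exp (-(2*s^2/v)) :=
              mul_nonneg (Real.rpow_nonneg hv.le _) (Real.exp_pos _).le
            calc v ^ (2*ν+1) * Real.exp (-(2*s^2/v)) * Real.exp (-(1/2) * s^2)
                ≤ v ^ (2*ν+1) * Real.exp (-(2*s^2/v)) * 1 :=
                  mul_le_mul_of_nonneg_left e4 e6
              _ ≤ v ^ (-m) * Real.exp (-(2*s^2/v)) * 1 :=
                  mul_le_mul_of_nonneg_right e5 zero_le_one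
        _ ≤ 2^m * Real.exp (M^2/2) := by
            rw [mul_one]
            calc v ^ (-m) * Real.exp (-(2*s^2/v)) ≤ 2^m := key2
              _ ≤ 2^m * Real.exp (M^2/2) := le_mul_of_one_le_right (by linarith) hexp1
  have hsplit2 : Real.exp (-s^2) = Real.exp (-(1/2)*s^2) * Real.exp (-(1/2)*s^2) := by
    rw [← Real.exp_add]; ring_nf
  calc |2 * ((s + r) / r) ^ (2*ν+1) * Real.exp (-(s^2 * (s + 3*r) / (s + r)))|
      = 2 * (v ^ (2*ν+1) * Real.exp (-(2*s^2/v)) * Real.exp (-(1/2)*s^2))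
          * Real.exp (-(1/2)*s^2) := by rw [habs, hsplit2]; ring
    _ ≤ 2 * (2^m * Real.exp (M^2/2)) * Real.exp (-(1/2)*s^2) :=
        mul_le_mul_of_nonneg_right (mul_le_mul_of_nonneg_left key (by norm_num))
          (Real.exp_pos _).le
    _ = 2 * 2^m * Real.exp (M^2/2) * Real.exp (-(1/2)*s^2) := by ring

lemma Hfun_bound (ν : ℝ) (t : ℝ) (ht : max 1 (2 * max (-(2*ν+1)) 0) ≤ t) (s : ℝ)
    (hs : -Real.sqrt t < s) :
    |Hfun ν t s| ≤ (2 * 2 ^ (max (-(2*ν+1)) 0) * Real.exp ((max (2*ν+1) 0)^2/2)) *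
      Real.exp (-(1/2) * s^2) := by
  have ht1 : (1:ℝ) ≤ t := le_trans (le_max_left _ _) ht
  have hr1 : (1:ℝ) ≤ Real.sqrt t := by
    rw [show (1:ℝ) = Real.sqrt 1 by simp]
    exact Real.sqrt_le_sqrt ht1
  exact core_bound ν _ _ t (Real.sqrt t) s (le_max_right _ _) (le_max_left _ _)
    (le_max_right _ _) (le_max_left _ _) hr1 (Real.sq_sqrt (by linarith)).symm
    (le_trans (le_max_right _ _) ht) hs
lemma sqrt_tendsto_atTop : Tendsto Real.sqrt atTop atTop := by
  have h : Real.sqrt = fun x : ℝ => x ^ ((1:ℝ)/2) := funext fun x => Real.sqrt_eq_rpow x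
  rw [h]
  exact tendsto_rpow_atTop (by norm_num)

lemma Hfun_tendsto (ν s : ℝ) :
    Tendsto (fun t => Hfun ν t s) atTop (𝓝 (2 * Real.exp (-(3 * s^2)))) := by
  have hcomp : (fun t => Hfun ν t s) = (fun r => 2 * ((s + r)/r) ^ (2*ν+1) *
      Real.exp (-(s^2 * (s + 3*r)/(s + r)))) ∘ Real.sqrt := rfl
  rw [hcomp]
  refine Tendsto.comp ?_ sqrt_tendsto_atTop
  have h1 : Tendsto (fun r : ℝ => (s + r)/r) atTop (𝓝 1) := by
    have h0 : Tendsto (fun r : ℝ => s * r⁻¹ + 1) atTop (𝓝 (s * 0 + 1)) :=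
      (tendsto_inv_atTop_zero.const_mul s).add_const 1
    rw [mul_zero, zero_add] at h0
    apply h0.congr'
    filter_upwards [eventually_gt_atTop 0] with r hr
    field_simp
  have h2 : Tendsto (fun r : ℝ => ((s + r)/r) ^ (2*ν+1)) atTop (𝓝 1) := by
    have hc : ContinuousAt (fun x : ℝ => x ^ (2*ν+1)) 1 :=
      Real.continuousAt_rpow_const 1 _ (Or.inl one_ne_zero)
    have := hc.tendsto.comp h1
    rw [Real.one_rpow] at this
    exact this
  have h3 : Tendsto (fun r : ℝ => s^2 * (s + 3*r)/(s+r)) atTop (𝓝 (3 * s^2)) := by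
    have ha : Tendsto (fun r : ℝ => s + r) atTop atTop :=
      tendsto_atTop_add_const_left _ s tendsto_id
    have hb : Tendsto (fun r : ℝ => 3*s^2 - (2*s^3) * (s+r)⁻¹) atTop
        (𝓝 (3*s^2 - (2*s^3) * 0)) :=
      tendsto_const_nhds.sub (ha.inv_tendsto_atTop.const_mul (2*s^3))
    rw [mul_zero, sub_zero] at hb
    apply hb.congr'
    filter_upwards [eventually_gt_atTop (|s| + 1)] with r hr
    have hsr : 0 < s + r := by
      have := neg_abs_le s
      linarith
    field_simp
    ring
  have hfinal := (tendsto_const_nhds (x := (2:ℝ))).mul h2 |>.mul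
    ((Real.continuous_exp.tendsto _).comp h3.neg)
  simpa using hfinal

lemma integral_limit_value :
    (∫ s : ℝ, 2 * Real.exp (-(3 * s^2))) = 2 * Real.sqrt (Real.pi / 3) := by
  rw [MeasureTheory.integral_const_mul]
  congr 1
  rw [← integral_gaussian 3]
  congr 1
  funext x
  ring_nf

lemma Hfun_measurable (ν t : ℝ) : Measurable (Hfun ν t) := by
  apply Measurable.mul
  · exact measurable_const.mul
      (((measurable_id.add_const _).div_const _).pow measurable_const)
  · exact Real.measurable_exp.comp
      ((((measurable_id.pow_const 2).mul (measurable_id.add_const _)).div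
        (measurable_id.add_const _)).neg)

lemma tendsto_integral_Hfun (ν : ℝ) :
    Tendsto (fun t : ℝ => ∫ s in Set.Ioi (-Real.sqrt t), Hfun ν t s) atTop
      (𝓝 (2 * Real.sqrt (Real.pi / 3))) := by
  have hrw : (fun t : ℝ => ∫ s in Set.Ioi (-Real.sqrt t), Hfun ν t s)
      = fun t : ℝ => ∫ s, (Set.Ioi (-Real.sqrt t)).indicator (Hfun ν t) s :=
    funext fun t => (integral_indicator measurableSet_Ioi).symm
  rw [hrw, ← integral_limit_value]
  refine tendsto_integral_filter_of_dominated_convergence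
    (bound := fun s => (2 * 2 ^ (max (-(2*ν+1)) 0) * Real.exp ((max (2*ν+1) 0)^2/2)) *
      Real.exp (-(1/2) * s^2)) ?_ ?_ ?_ ?_
  · filter_upwards with t
    exact ((Hfun_measurable ν t).indicator measurableSet_Ioi).aestronglyMeasurable
  · filter_upwards [eventually_ge_atTop (max 1 (2 * max (-(2*ν+1)) 0))] with t ht
    apply ae_of_all
    intro s
    by_cases hmem : s ∈ Set.Ioi (-Real.sqrt t)
    · rw [Set.indicator_of_mem hmem, Real.norm_eq_abs]
      exact Hfun_bound ν t ht s hmem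
    · rw [Set.indicator_of_notMem hmem, norm_zero]
      positivity
  · exact (integrable_exp_neg_mul_sq (by norm_num : (0:ℝ) < 1/2)).const_mul _
  · apply ae_of_all
    intro s
    apply Tendsto.congr' _ (Hfun_tendsto ν s)
    filter_upwards [eventually_ge_atTop (s^2 + 1)] with t ht
    have h1 : |s| < Real.sqrt t := by
      rw [← Real.sqrt_sq_eq_abs]
      exact Real.sqrt_lt_sqrt (sq_nonneg s) (by linarith)
    have hmem : s ∈ Set.Ioi (-Real.sqrt t) := by
      simp only [Set.mem_Ioi]
      have := neg_abs_le s
      linarith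
    rw [Set.indicator_of_mem hmem]

theorem stmt11 (ν : ℝ) :
    (fun z : ℝ => ∫ y in Set.Ioi (0:ℝ), y ^ ν * Real.exp (-y - z * y ^ (-(1:ℝ)/2)))
      ~[atTop]
    (fun z : ℝ => 2 * (Real.pi / 3) ^ ((1:ℝ)/2) * (z^2/4) ^ ((2*ν+1)/6) *
        Real.exp (-3 * (z^2/4) ^ ((1:ℝ)/3))) := by
  have hT : Tendsto (fun z : ℝ => (z^2/4) ^ ((1:ℝ)/3)) atTop atTop := by
    apply (tendsto_rpow_atTop (by norm_num : (0:ℝ) < 1/3)).comp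
    apply Tendsto.atTop_div_const (by norm_num : (0:ℝ) < 4)
    exact tendsto_pow_atTop two_ne_zero
  have hsqrtpos : 0 < Real.sqrt (Real.pi/3) := Real.sqrt_pos.mpr (by positivity)
  rw [Asymptotics.isEquivalent_iff_tendsto_one]
  swap
  · filter_upwards [eventually_gt_atTop (0:ℝ)] with z hz
    have h2 : (0:ℝ) < z^2/4 := by positivity
    have h3 := Real.rpow_pos_of_pos h2 ((2*ν+1)/6)
    have h4 := Real.rpow_pos_of_pos (show (0:ℝ) < Real.pi/3 by positivity) ((1:ℝ)/2)
    positivity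
  have hmain : Tendsto (fun z : ℝ =>
      (∫ s in Set.Ioi (-Real.sqrt ((z^2/4) ^ ((1:ℝ)/3))), Hfun ν ((z^2/4) ^ ((1:ℝ)/3)) s)
        / (2 * Real.sqrt (Real.pi/3))) atTop (𝓝 1) := by
    have h := ((tendsto_integral_Hfun ν).comp hT).div_const (2 * Real.sqrt (Real.pi/3))
    rw [div_self (by positivity : (2 * Real.sqrt (Real.pi/3)) ≠ 0)] at h
    exact h
  apply Tendsto.congr' _ hmain
  filter_upwards [eventually_gt_atTop (0:ℝ)] with z hz
  set t := (z^2/4) ^ ((1:ℝ)/3) with htdef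
  have h2 : (0:ℝ) < z^2/4 := by positivity
  have ht : 0 < t := Real.rpow_pos_of_pos h2 _
  have hzt : 2*t*Real.sqrt t = z := by
    have e1 : t * Real.sqrt t = t ^ ((3:ℝ)/2) := by
      rw [Real.sqrt_eq_rpow]
      nth_rewrite 1 [← Real.rpow_one t]
      rw [← Real.rpow_add ht]
      norm_num
    rw [mul_assoc, e1, htdef, ← Real.rpow_mul h2.le]
    rw [show ((1:ℝ)/3 * (3/2)) = (1:ℝ)/2 by norm_num]
    rw [show z^2/4 = (z/2)^2 by ring, ← Real.sqrt_eq_rpow,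
      Real.sqrt_sq (by linarith : (0:ℝ) ≤ z/2)]
    ring
  have hA : t ^ (ν + 1/2) = (z^2/4) ^ ((2*ν+1)/6) := by
    rw [htdef, ← Real.rpow_mul h2.le, show (1:ℝ)/3 * (ν + 1/2) = (2*ν+1)/6 by ring]
  have hu : (∫ y in Set.Ioi (0:ℝ), y ^ ν * Real.exp (-y - z * y ^ (-(1:ℝ)/2)))
      = t ^ (ν + 1/2) * Real.exp (-(3*t)) * ∫ s in Set.Ioi (-Real.sqrt t), Hfun ν t s := by
    rw [← hzt]
    exact subst_eq ν t ht
  have hBne : t ^ (ν + 1/2) ≠ 0 := ne_of_gt (Real.rpow_pos_of_pos ht _)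
  have hEne : Real.exp (-(3*t)) ≠ 0 := Real.exp_ne_zero _
  rw [Pi.div_apply, hu, ← hA, ← Real.sqrt_eq_rpow,
    show Real.exp (-3*t) = Real.exp (-(3*t)) by ring_nf]
  field_simp
end

section
/- For every fixed d > 0, a > 0 and real ρ, as z → +∞ one has the asymptotic equivalence ∫₀^d t^{−ρ} e^{−a t − z t^{−1/2}} dt ∼ d^{1−ρ} (z²/4d)^{−1/2} e^{−a d − 2 (z²/4d)^{1/2}}. -/
open MeasureTheory Filter Asymptotics Set Real Topology

lemma stmt12_aux_int (c : ℝ) (n : ℕ) :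
    IntegrableOn (fun v : ℝ => (v + c)^n * Real.exp (-v)) (Ioi (0:ℝ)) := by
  have hk : ∀ k : ℕ, IntegrableOn (fun v : ℝ => v^k * Real.exp (-v)) (Ioi (0:ℝ)) := by
    intro k
    have := Real.GammaIntegral_convergent (s := (k:ℝ)+1) (by positivity)
    refine (this.congr_fun ?_ measurableSet_Ioi)
    intro x hx
    simp only [add_sub_cancel_right, Real.rpow_natCast]
    ring
  have : IntegrableOn (fun v : ℝ => ∑ k ∈ Finset.range (n+1),
      ((n.choose k : ℝ) * c^(n-k)) * (v^k * Real.exp (-v))) (Ioi (0:ℝ)) := by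
    apply MeasureTheory.integrable_finset_sum
    intro k _
    exact (hk k).const_mul _
  refine this.congr_fun ?_ measurableSet_Ioi
  intro x hx
  simp only [add_pow, Finset.sum_mul]
  apply Finset.sum_congr rfl
  intro k _
  ring

set_option maxHeartbeats 1000000 in
theorem stmt12 (d a ρ : ℝ) (hd : 0 < d) (ha : 0 < a) :
    (fun z : ℝ => ∫ t in Set.Ioc (0:ℝ) d, t ^ (-ρ) * Real.exp (-a * t - z * t ^ (-(1:ℝ)/2)))
      ~[atTop]
    (fun z : ℝ => d ^ (1 - ρ) * (z^2/(4*d)) ^ (-(1:ℝ)/2) *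
        Real.exp (-a * d - 2 * (z^2/(4*d)) ^ ((1:ℝ)/2))) := by
  set c : ℝ := d ^ (-(1:ℝ)/2) with hc_def
  have hc : 0 < c := Real.rpow_pos_of_pos hd _
  have hcsq : c^2 = d⁻¹ := by
    rw [hc_def, ← Real.rpow_natCast (d ^ (-(1:ℝ)/2)) 2, ← Real.rpow_mul hd.le]
    norm_num [Real.rpow_neg_one]
  have hdinv : d = (c^2)⁻¹ := by rw [hcsq, inv_inv]
  set g : ℝ → ℝ := fun u => 2 * (u+c) ^ (2*ρ-3) * Real.exp (-a * ((u+c)^2)⁻¹) with hg_def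
  have hg0 : g 0 = 2 * c ^ (2*ρ-3) * Real.exp (-a * d) := by
    simp only [hg_def, zero_add, hcsq, inv_inv]
  have hg0pos : 0 < g 0 := by rw [hg0]; positivity
  -- Step D: closed form of RHS for z > 0
  have stepD : ∀ z : ℝ, 0 < z →
      d ^ (1 - ρ) * (z^2/(4*d)) ^ (-(1:ℝ)/2) *
        Real.exp (-a * d - 2 * (z^2/(4*d)) ^ ((1:ℝ)/2))
      = g 0 * (Real.exp (-z*c) / z) := by
    intro z hz
    have h0 : (0:ℝ) ≤ c*z/2 := by positivity
    have key1 : z^2/(4*d) = (c*z/2)^2 := by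
      rw [div_pow, mul_pow, hcsq]; field_simp; ring
    have key2 : ((c*z/2)^2) ^ ((1:ℝ)/2) = c*z/2 := by
      rw [← Real.rpow_natCast (c*z/2) 2, ← Real.rpow_mul h0]
      norm_num
    have key3 : ((c*z/2)^2) ^ (-(1:ℝ)/2) = (c*z/2)⁻¹ := by
      rw [← Real.rpow_natCast (c*z/2) 2, ← Real.rpow_mul h0]
      norm_num [Real.rpow_neg_one]
    have key4 : c ^ (2*ρ-3) * c = d ^ (1-ρ) := by
      have : c ^ (2*ρ-3) * c = c ^ (2*ρ-2) := by
        rw [show (2*ρ-2) = (2*ρ-3)+1 by ring, Real.rpow_add hc, Real.rpow_one]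
      rw [this, hc_def, ← Real.rpow_mul hd.le]
      congr 1
      ring
    have hexp : Real.exp (-a*d - 2*(c*z/2)) = Real.exp (-a*d) * Real.exp (-z*c) := by
      rw [← Real.exp_add]; ring_nf
    rw [key1, key2, key3, hg0, hexp, ← key4]
    field_simp
  -- the substitution map
  set φ : ℝ → ℝ := fun u => ((u+c)^2)⁻¹ with hφ_def
  have hφderiv : ∀ u ∈ Ici (0:ℝ), HasDerivWithinAt φ (-2/(u+c)^3) (Ici (0:ℝ)) u := by
    intro u hu
    have hx : 0 < u + c := by have : (0:ℝ) ≤ u := hu; linarith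
    have h1 : HasDerivAt (fun u : ℝ => (u+c)^2) (2*(u+c)) u := by
      simpa using ((hasDerivAt_id u).add_const c).fun_pow 2
    have h2 := h1.inv (by positivity)
    have h3 : -(2*(u+c)) / ((u+c)^2)^2 = -2/(u+c)^3 := by
      field_simp
    rw [h3] at h2
    exact h2.hasDerivWithinAt
  have hφinj : InjOn φ (Ici (0:ℝ)) := by
    have : StrictAntiOn φ (Ici (0:ℝ)) := by
      intro u1 h1 u2 h2 h12
      have hx1 : 0 < u1 + c := by have : (0:ℝ) ≤ u1 := h1; linarith
      have hx2 : 0 < u2 + c := by have : (0:ℝ) ≤ u2 := h2; linarith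
      simp only [hφ_def]
      rw [inv_lt_inv₀ (by positivity) (by positivity)]
      nlinarith
    exact this.injOn
  have hφimg : φ '' (Ici (0:ℝ)) = Ioc (0:ℝ) d := by
    apply Subset.antisymm
    · rintro t ⟨u, hu, rfl⟩
      have hu0 : (0:ℝ) ≤ u := hu
      have hx : 0 < u + c := by linarith
      constructor
      · simp only [hφ_def]; positivity
      · simp only [hφ_def]
        rw [hdinv, inv_le_inv₀ (by positivity) (by positivity)]
        nlinarith
    · rintro t ⟨ht0, htd⟩
      refine ⟨t ^ (-(1:ℝ)/2) - c, ?_, ?_⟩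
      · have : c ≤ t ^ (-(1:ℝ)/2) := by
          rw [hc_def]
          exact Real.rpow_le_rpow_of_nonpos ht0 htd (by norm_num)
        simpa using this
      · simp only [hφ_def, sub_add_cancel]
        rw [← Real.rpow_natCast (t ^ (-(1:ℝ)/2)) 2, ← Real.rpow_mul ht0.le]
        norm_num [Real.rpow_neg_one]
  -- Step A: substitution t = ((u+c)^2)⁻¹
  have stepA : ∀ z : ℝ,
      (∫ t in Set.Ioc (0:ℝ) d, t ^ (-ρ) * Real.exp (-a * t - z * t ^ (-(1:ℝ)/2)))
        = (∫ u in Ioi (0:ℝ), g u * Real.exp (-z*u)) * Real.exp (-z*c) := by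
    intro z
    rw [← hφimg, integral_image_eq_integral_abs_deriv_smul measurableSet_Ici hφderiv hφinj]
    have hcongr : ∀ u ∈ Ici (0:ℝ),
        |(-2/(u+c)^3)| • ((φ u) ^ (-ρ) * Real.exp (-a * (φ u) - z * (φ u) ^ (-(1:ℝ)/2)))
          = (g u * Real.exp (-z*u)) * Real.exp (-z*c) := by
      intro u hu
      have hu0 : (0:ℝ) ≤ u := hu
      have hx : 0 < u + c := by linarith
      set x : ℝ := u + c with hx_def
      have hx2 : ((x^2)⁻¹ : ℝ) = x ^ ((-2):ℝ) := by
        rw [Real.rpow_neg hx.le, Real.rpow_two]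
      have A1 : ((x^2)⁻¹ : ℝ) ^ (-ρ) = x ^ (2*ρ) := by
        rw [hx2, ← Real.rpow_mul hx.le]; congr 1; ring
      have A2 : ((x^2)⁻¹ : ℝ) ^ (-(1:ℝ)/2) = x := by
        rw [hx2, ← Real.rpow_mul hx.le]; norm_num
      have A3 : |(-2/x^3)| = 2/x^3 := by
        rw [abs_div]
        simp [abs_of_pos (pow_pos hx 3)]
      have A4 : x ^ (2*ρ-3) = x ^ (2*ρ) / x^3 := by
        rw [show (2*ρ-3 : ℝ) = 2*ρ + (-(3:ℕ):ℝ) by push_cast; ring,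
          Real.rpow_add hx, Real.rpow_neg hx.le, Real.rpow_natCast]
        ring
      have hφu : φ u = (x^2)⁻¹ := rfl
      rw [smul_eq_mul, hφu, A1, A2, A3]
      rw [hg_def]
      simp only
      rw [← hx_def, A4]
      rw [show -a * (x^2)⁻¹ - z*x = (-a * (x^2)⁻¹) + (-z*u) + (-z*c) by rw [hx_def]; ring,
        Real.exp_add, Real.exp_add]
      field_simp
    rw [setIntegral_congr_fun measurableSet_Ici hcongr, integral_mul_const,
      ← integral_Ici_eq_integral_Ioi]
  -- Step B: scaling u = v/z
  have stepB : ∀ z : ℝ, 0 < z →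
      (∫ v in Ioi (0:ℝ), g (v/z) * Real.exp (-v))
        = z * ∫ u in Ioi (0:ℝ), g u * Real.exp (-z*u) := by
    intro z hz
    have h := integral_comp_mul_left_Ioi (fun u => g u * Real.exp (-z*u)) 0 (inv_pos.mpr hz)
    simp only [mul_zero, inv_inv, smul_eq_mul] at h
    rw [← h]
    apply setIntegral_congr_fun measurableSet_Ioi
    intro v hv
    simp only
    rw [div_eq_inv_mul]
    congr 2
    field_simp
  -- continuity and measurability of g
  have hgmeas : Measurable g := by fun_prop
  have hgcont : ContinuousAt g 0 := by
    have h1 : ContinuousAt (fun u : ℝ => (u+c) ^ (2*ρ-3)) 0 := by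
      apply ContinuousAt.rpow_const (by fun_prop)
      left; simpa using hc.ne'
    have h2 : ContinuousAt (fun u : ℝ => Real.exp (-a * ((u+c)^2)⁻¹)) 0 := by
      apply Real.continuous_exp.continuousAt.comp
      apply ContinuousAt.mul continuousAt_const
      apply ContinuousAt.inv₀ (by fun_prop)
      simpa using (pow_ne_zero 2 hc.ne')
    exact (continuousAt_const.mul h1).mul h2
  set n : ℕ := ⌈|2*ρ-3|⌉₊ with hn_def
  have habs : |2*ρ-3| ≤ (n:ℝ) := Nat.le_ceil _
  have hb1 : 2*ρ-3 ≤ (n:ℝ) := (abs_le.mp habs).2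
  have hb2 : -(n:ℝ) ≤ 2*ρ-3 := (abs_le.mp habs).1
  have hub : ∀ x : ℝ, c ≤ x → ∀ v : ℝ, x ≤ v + c →
      x ^ (2*ρ-3) ≤ (v+c)^n + c ^ (-(n:ℝ)) := by
    intro x hx v hxv
    have hx0 : 0 < x := lt_of_lt_of_le hc hx
    rcases le_or_gt 1 x with h1 | h1
    · have : x ^ (2*ρ-3) ≤ x ^ ((n:ℝ)) := Real.rpow_le_rpow_of_exponent_le h1 hb1
      rw [Real.rpow_natCast] at this
      calc x ^ (2*ρ-3) ≤ x^n := this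
        _ ≤ (v+c)^n := pow_le_pow_left₀ hx0.le hxv n
        _ ≤ (v+c)^n + c ^ (-(n:ℝ)) := le_add_of_nonneg_right (Real.rpow_nonneg hc.le _)
    · have h2 : x ^ (2*ρ-3) ≤ x ^ (-(n:ℝ)) :=
        Real.rpow_le_rpow_of_exponent_ge hx0 h1.le hb2
      have h3 : x ^ (-(n:ℝ)) ≤ c ^ (-(n:ℝ)) :=
        Real.rpow_le_rpow_of_nonpos hc hx (neg_nonpos.mpr (Nat.cast_nonneg n))
      have h4 : (0:ℝ) ≤ (v+c)^n := pow_nonneg (le_trans hx0.le hxv) n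
      linarith
  -- Step C: dominated convergence
  have stepC : Tendsto (fun z : ℝ => ∫ v in Ioi (0:ℝ), g (v/z) * Real.exp (-v))
      atTop (𝓝 (g 0)) := by
    have htarget : g 0 = ∫ v in Ioi (0:ℝ), g 0 * Real.exp (-v) := by
      rw [integral_const_mul, integral_exp_neg_Ioi_zero, mul_one]
    rw [htarget]
    apply tendsto_integral_filter_of_dominated_convergence
      (bound := fun v => 2 * ((v+c)^n + c ^ (-(n:ℝ))) * Real.exp (-v))
    · filter_upwards with z
      apply Measurable.aestronglyMeasurable
      fun_prop
    · filter_upwards [eventually_ge_atTop (1:ℝ)] with z hz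
      rw [ae_restrict_iff' measurableSet_Ioi]
      apply ae_of_all
      intro v hv
      have hv0 : 0 < v := hv
      set x : ℝ := v/z + c with hx_def
      have hx1 : c ≤ x := by
        have : 0 ≤ v/z := div_nonneg hv0.le (by linarith)
        simp [hx_def]; linarith
      have hx2 : x ≤ v + c := by
        have : v/z ≤ v := div_le_self hv0.le hz
        simp [hx_def]; linarith
      have hx0 : 0 < x := lt_of_lt_of_le hc hx1
      have hgval : g (v/z) = 2 * x ^ (2*ρ-3) * Real.exp (-a * (x^2)⁻¹) := rfl
      have hexple : Real.exp (-a * (x^2)⁻¹) ≤ 1 := by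
        rw [Real.exp_le_one_iff]
        have : 0 < (x^2)⁻¹ := by positivity
        nlinarith
      have hgle : g (v/z) ≤ 2 * ((v+c)^n + c ^ (-(n:ℝ))) := by
        rw [hgval]
        have h5 := hub x hx1 v hx2
        have h6 : 0 < x ^ (2*ρ-3) := Real.rpow_pos_of_pos hx0 _
        nlinarith [Real.exp_pos (-a * (x^2)⁻¹)]
      have hgpos : 0 ≤ g (v/z) := by
        rw [hgval]; positivity
      rw [norm_mul, Real.norm_eq_abs, Real.norm_eq_abs, abs_of_nonneg hgpos,
        abs_of_pos (Real.exp_pos _)]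
      exact mul_le_mul_of_nonneg_right hgle (Real.exp_pos _).le
    · have h2 : IntegrableOn (fun v : ℝ => Real.exp (-v)) (Ioi (0:ℝ)) := by
        simpa using exp_neg_integrableOn_Ioi (0:ℝ) one_pos
      have h3 := ((stmt12_aux_int c n).const_mul 2).add ((h2.const_mul (2 * c ^ (-(n:ℝ)))))
      refine IntegrableOn.congr_fun h3 ?_ measurableSet_Ioi
      intro x hx
      simp only [Pi.add_apply]
      ring
    · apply ae_of_all
      intro v
      have hvz : Tendsto (fun z : ℝ => v / z) atTop (𝓝 0) :=
        tendsto_const_nhds.div_atTop tendsto_id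
      exact ((hgcont.tendsto.comp hvz).mul tendsto_const_nhds)
  -- Final assembly
  rw [isEquivalent_iff_tendsto_one (by
    filter_upwards [eventually_gt_atTop (0:ℝ)] with z hz
    rw [stepD z hz]
    positivity)]
  have key : Tendsto (fun z : ℝ =>
      (∫ v in Ioi (0:ℝ), g (v/z) * Real.exp (-v)) / g 0) atTop (𝓝 1) := by
    have := stepC.div_const (g 0)
    rwa [div_self hg0pos.ne'] at this
  refine key.congr' ?_
  filter_upwards [eventually_gt_atTop (0:ℝ)] with z hz
  simp only [Pi.div_apply]
  rw [stepA z, stepD z hz, stepB z hz]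
  field_simp
end

section
/- Let d > 0, a > 0 and ρ be real, and let s ∈ ℂ satisfy Re(s) > 0 and Re(s)/2 − ρ > −1. Then the Mellin transform at s of the function z ↦ ∫₀^d t^{−ρ} e^{−a t − z t^{−1/2}} dt (defined for z > 0) equals Γ(s) · ∫₀^d t^{s/2 − ρ} e^{−a t} dt. -/
open MeasureTheory Set Complex

namespace Stmt15

variable {d a ρ : ℝ} {s : ℂ}

/-- The integrand as a function of `(z, t)`. -/
noncomputable def F (a ρ : ℝ) (s : ℂ) (z t : ℝ) : ℂ :=
  (z : ℂ) ^ (s - 1) * ((t ^ (-ρ) * Real.exp (-a * t - z * t ^ (-(1:ℝ)/2)) : ℝ) : ℂ)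

lemma continuousOn_F :
    ContinuousOn (fun p : ℝ × ℝ => F a ρ s p.1 p.2) (Ioi (0:ℝ) ×ˢ Ioc (0:ℝ) d) := by
  apply ContinuousOn.mul
  · exact ((continuous_ofReal.comp continuous_fst).continuousOn.cpow continuousOn_const
      (fun p hp => Or.inl (by simpa using hp.1)))
  · refine Complex.continuous_ofReal.comp_continuousOn (ContinuousOn.mul ?_ ?_)
    · exact continuous_snd.continuousOn.rpow_const (fun p hp => Or.inl (ne_of_gt hp.2.1))
    · refine Real.continuous_exp.comp_continuousOn (ContinuousOn.sub ?_ ?_)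
      · exact (continuous_const.mul continuous_snd).continuousOn
      · exact continuous_fst.continuousOn.mul
          (continuous_snd.continuousOn.rpow_const (fun p hp => Or.inl (ne_of_gt hp.2.1)))

lemma norm_F {z t : ℝ} (hz : 0 < z) (ht : 0 < t) :
    ‖F a ρ s z t‖ = z ^ (s.re - 1) * (t ^ (-ρ) * Real.exp (-a * t - z * t ^ (-(1:ℝ)/2))) := by
  simp only [F, norm_mul, Complex.norm_real, Real.norm_eq_abs,
    Complex.norm_cpow_eq_rpow_re_of_pos hz, Complex.sub_re, Complex.one_re]
  rw [_root_.abs_of_nonneg (show (0:ℝ) ≤ t ^ (-ρ) by positivity),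
    _root_.abs_of_nonneg (Real.exp_pos _).le]

lemma slice_integrable (hs : 0 < s.re) {t : ℝ} (ht : 0 < t) :
    Integrable (fun z => F a ρ s z t) (volume.restrict (Ioi (0:ℝ))) := by
  set c : ℝ := t ^ (-(1:ℝ)/2) with hcdef
  have hc : 0 < c := Real.rpow_pos_of_pos ht _
  have hbase : IntegrableOn (fun z : ℝ => z ^ (s.re - 1) * Real.exp (-c * z)) (Ioi 0) := by
    have h := integrableOn_rpow_mul_exp_neg_mul_rpow (p := 1) (s := s.re - 1) (b := c)
      (by linarith) one_pos hc
    refine h.congr_fun (fun z hz => ?_) measurableSet_Ioi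
    simp only [Real.rpow_one]
  have hg : IntegrableOn (fun z : ℝ => (t ^ (-ρ) * Real.exp (-a * t)) *
      (z ^ (s.re - 1) * Real.exp (-c * z))) (Ioi 0) := hbase.const_mul _
  refine hg.integrable.mono' ?_ ?_
  · exact ((continuousOn_F (d := t) (a := a) (ρ := ρ) (s := s)).comp
      (continuous_id.prodMk continuous_const).continuousOn
      (fun z hz => ⟨hz, ht, le_rfl⟩)).aestronglyMeasurable measurableSet_Ioi
  · filter_upwards [ae_restrict_mem measurableSet_Ioi] with z hz
    rw [norm_F hz ht]
    have : Real.exp (-a * t - z * c) = Real.exp (-a * t) * Real.exp (-c * z) := by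
      rw [← Real.exp_add]; ring_nf
    rw [this]; ring_nf; exact le_refl _

lemma norm_integral_eq (hs : 0 < s.re) {t : ℝ} (ht : 0 < t) :
    ∫ z in Ioi (0:ℝ), ‖F a ρ s z t‖
      = Real.Gamma s.re * (t ^ (s.re / 2 - ρ) * Real.exp (-a * t)) := by
  set c : ℝ := t ^ (-(1:ℝ)/2) with hcdef
  have hc : 0 < c := Real.rpow_pos_of_pos ht _
  have h1 : ∫ z in Ioi (0:ℝ), ‖F a ρ s z t‖
      = (t ^ (-ρ) * Real.exp (-a * t)) * ∫ z in Ioi (0:ℝ), z ^ (s.re - 1) * Real.exp (-(c * z)) := by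
    rw [← integral_const_mul]
    refine setIntegral_congr_fun measurableSet_Ioi fun z hz => ?_
    rw [norm_F hz ht]
    have : Real.exp (-a * t - z * c) = Real.exp (-a * t) * Real.exp (-(c * z)) := by
      rw [← Real.exp_add]; ring_nf
    rw [this]; ring
  rw [h1, Real.integral_rpow_mul_exp_neg_mul_Ioi hs hc]
  have h2 : (1 / c) = t ^ ((1:ℝ)/2) := by
    rw [hcdef, neg_div, Real.rpow_neg ht.le, one_div, inv_inv]
  have h3 : (t ^ ((1:ℝ)/2)) ^ s.re = t ^ (s.re / 2) := by
    rw [← Real.rpow_mul ht.le]; congr 1; ring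
  have h4 : t ^ (s.re / 2 - ρ) = t ^ (-ρ) * t ^ (s.re / 2) := by
    rw [← Real.rpow_add ht]; congr 1; ring
  rw [h2, h3, h4]; ring

lemma inner_integral (hs : 0 < s.re) {t : ℝ} (ht : 0 < t) :
    ∫ z in Ioi (0:ℝ), F a ρ s z t
      = Complex.Gamma s * ((t : ℂ) ^ (s / 2 - (ρ : ℂ)) * (Real.exp (-a * t) : ℂ)) := by
  set c : ℝ := t ^ (-(1:ℝ)/2) with hcdef
  have hc : 0 < c := Real.rpow_pos_of_pos ht _
  have ht0 : (t : ℂ) ≠ 0 := Complex.ofReal_ne_zero.mpr ht.ne'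
  have h1 : ∫ z in Ioi (0:ℝ), F a ρ s z t
      = ((t ^ (-ρ) * Real.exp (-a * t) : ℝ) : ℂ) *
        ∫ z in Ioi (0:ℝ), (z : ℂ) ^ (s - 1) * Complex.exp (-((c:ℂ) * z)) := by
    rw [← integral_const_mul]
    refine setIntegral_congr_fun measurableSet_Ioi fun z hz => ?_
    rw [F]
    have he : Real.exp (-a * t - z * c) = Real.exp (-a * t) * Real.exp (-(c * z)) := by
      rw [← Real.exp_add]; ring_nf
    rw [he]
    push_cast
    ring
  have h2 : (1 / (c:ℂ)) ^ s = (t : ℂ) ^ (s / 2) := by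
    have e0 : (1:ℝ) / c = t ^ ((1:ℝ)/2) := by
      rw [hcdef, neg_div, Real.rpow_neg ht.le, one_div, inv_inv]
    have e1 : (1 / (c:ℂ)) = ((t ^ ((1:ℝ)/2) : ℝ) : ℂ) := by
      rw [← e0]; push_cast; ring
    have him : (Complex.log (t:ℂ) * (((1:ℝ)/2 : ℝ) : ℂ)).im = 0 := by
      simp [Complex.mul_im, Complex.log_im, Complex.arg_ofReal_of_nonneg ht.le]
    rw [e1, Complex.ofReal_cpow ht.le, ← Complex.cpow_mul]
    · congr 1; push_cast; ring
    · rw [him]; exact neg_lt_zero.mpr Real.pi_pos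
    · rw [him]; exact Real.pi_pos.le
  have h3 : ((t ^ (-ρ) : ℝ) : ℂ) = (t : ℂ) ^ (-(ρ:ℂ)) := by
    rw [Complex.ofReal_cpow ht.le, Complex.ofReal_neg]
  have h4 : (t : ℂ) ^ (-(ρ:ℂ)) * (t : ℂ) ^ (s / 2) = (t : ℂ) ^ (s / 2 - (ρ:ℂ)) := by
    rw [← Complex.cpow_add _ _ ht0]; congr 1; ring
  rw [h1, Complex.integral_cpow_mul_exp_neg_mul_Ioi hs hc, Complex.ofReal_mul, h2, h3, ← h4]
  ring

lemma F_integrable (hd : 0 < d) (ha : 0 < a) (hs : 0 < s.re) (hsρ : -1 < s.re / 2 - ρ) :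
    Integrable (Function.uncurry (F a ρ s))
      ((volume.restrict (Ioi (0:ℝ))).prod (volume.restrict (Ioc (0:ℝ) d))) := by
  have hmeas : AEStronglyMeasurable (Function.uncurry (F a ρ s))
      ((volume.restrict (Ioi (0:ℝ))).prod (volume.restrict (Ioc (0:ℝ) d))) := by
    rw [Measure.prod_restrict]
    exact continuousOn_F.aestronglyMeasurable (measurableSet_Ioi.prod measurableSet_Ioc)
  rw [integrable_prod_iff' hmeas]
  constructor
  · filter_upwards [ae_restrict_mem measurableSet_Ioc] with t ht
    exact slice_integrable hs ht.1
  · have hK : IntegrableOn (fun t : ℝ => t ^ (s.re / 2 - ρ)) (Ioc (0:ℝ) d) :=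
      (intervalIntegrable_iff_integrableOn_Ioc_of_le hd.le).mp
        (intervalIntegral.intervalIntegrable_rpow' hsρ)
    have hKe : IntegrableOn (fun t : ℝ => t ^ (s.re / 2 - ρ) * Real.exp (-a * t))
        (Ioc (0:ℝ) d) := by
      refine hK.integrable.mono' ?_ ?_
      · refine ((continuousOn_id.rpow_const fun x hx => Or.inl (ne_of_gt hx.1)).mul
          (Real.continuous_exp.comp (continuous_const.mul continuous_id)).continuousOn
          ).aestronglyMeasurable measurableSet_Ioc
      · filter_upwards [ae_restrict_mem measurableSet_Ioc] with t ht
        rw [Real.norm_eq_abs,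
          _root_.abs_of_nonneg (mul_nonneg (Real.rpow_nonneg ht.1.le _) (Real.exp_nonneg _))]
        have h1 : Real.exp (-a * t) ≤ 1 := Real.exp_le_one_iff.mpr (by nlinarith [ht.1])
        have h2 : (0:ℝ) ≤ t ^ (s.re / 2 - ρ) := Real.rpow_nonneg ht.1.le _
        nlinarith
    have hH : Integrable
        (fun t : ℝ => Real.Gamma s.re * (t ^ (s.re / 2 - ρ) * Real.exp (-a * t)))
        (volume.restrict (Ioc (0:ℝ) d)) := hKe.integrable.const_mul _
    refine hH.congr ?_
    filter_upwards [ae_restrict_mem measurableSet_Ioc] with t ht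
    exact (norm_integral_eq hs ht.1).symm

end Stmt15

theorem stmt15 (d a ρ : ℝ) (hd : 0 < d) (ha : 0 < a) (s : ℂ)
    (hs : 0 < s.re) (hsρ : -1 < s.re / 2 - ρ) :
    mellin (fun z : ℝ =>
        ((∫ t in Set.Ioc (0:ℝ) d, t ^ (-ρ) * Real.exp (-a * t - z * t ^ (-(1:ℝ)/2)) : ℝ) : ℂ)) s
      = Complex.Gamma s *
          ∫ t in Set.Ioc (0:ℝ) d, (t : ℂ) ^ (s / 2 - (ρ : ℂ)) * (Real.exp (-a * t) : ℂ) := by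
  have step1 : mellin (fun z : ℝ =>
        ((∫ t in Set.Ioc (0:ℝ) d, t ^ (-ρ) * Real.exp (-a * t - z * t ^ (-(1:ℝ)/2)) : ℝ) : ℂ)) s
      = ∫ z in Ioi (0:ℝ), ∫ t in Ioc (0:ℝ) d, Stmt15.F a ρ s z t := by
    rw [mellin]
    refine setIntegral_congr_fun measurableSet_Ioi fun z hz => ?_
    have hcast : ((∫ t in Set.Ioc (0:ℝ) d,
          t ^ (-ρ) * Real.exp (-a * t - z * t ^ (-(1:ℝ)/2)) : ℝ) : ℂ)
        = ∫ t in Set.Ioc (0:ℝ) d,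
            ((t ^ (-ρ) * Real.exp (-a * t - z * t ^ (-(1:ℝ)/2)) : ℝ) : ℂ) :=
      (integral_ofReal).symm
    rw [smul_eq_mul, hcast, ← integral_const_mul]
    simp only [Stmt15.F]
  rw [step1, integral_integral_swap (Stmt15.F_integrable hd ha hs hsρ)]
  have step3 : ∫ t in Ioc (0:ℝ) d, ∫ z in Ioi (0:ℝ), Stmt15.F a ρ s z t
      = ∫ t in Ioc (0:ℝ) d,
          Complex.Gamma s * ((t : ℂ) ^ (s / 2 - (ρ:ℂ)) * (Real.exp (-a * t) : ℂ)) :=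
    setIntegral_congr_fun measurableSet_Ioc fun t ht => Stmt15.inner_integral hs ht.1
  rw [step3, integral_const_mul]
end

section
/- Let a > 0, t > 0 and ν > −1, and let s ∈ ℂ satisfy Re(s) > 0. Then the Mellin transform at s of the function z ↦ ∫₀^∞ y^ν e^{−a y − z (y + t)^{−1/2}} dy (defined for z > 0) equals Γ(s) · ∫₀^∞ y^ν (y + t)^{s/2} e^{−a y} dy. -/
open MeasureTheory Set

lemma aux_int {c : ℝ} (hc : 0 < c) {s : ℂ} (hs : 0 < s.re) :
    IntegrableOn (fun z : ℝ => (z:ℂ) ^ (s-1) * Complex.exp (-(c*z))) (Ioi 0) := by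
  have hmeas : AEStronglyMeasurable (fun z : ℝ => (z:ℂ) ^ (s-1) * Complex.exp (-(c*z)))
      (volume.restrict (Ioi 0)) := by
    apply Measurable.aestronglyMeasurable
    fun_prop
  have hb : IntegrableOn (fun z : ℝ => z ^ (s.re - 1) * Real.exp (-c * z)) (Ioi 0) := by
    have := integrableOn_rpow_mul_exp_neg_mul_rpow (p := 1) (s := s.re - 1) (b := c)
      (by linarith) one_pos hc
    simpa [Real.rpow_one] using this
  refine Integrable.mono' hb hmeas ?_
  filter_upwards [ae_restrict_mem measurableSet_Ioi] with z hz
  rw [norm_mul,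
    Complex.norm_cpow_eq_rpow_re_of_pos hz, Complex.norm_exp]
  simp [Complex.sub_re, neg_mul]

lemma aux_rpow {x : ℝ} (hx : 0 < x) (p : ℝ) :
    (1 / x ^ (-(1:ℝ)/2)) ^ p = x ^ (p/2) := by
  rw [show (-(1:ℝ)/2) = -(1/2) by ring, Real.rpow_neg hx.le, one_div, inv_inv,
    ← Real.rpow_mul hx.le]
  ring_nf

lemma aux_cpow {x : ℝ} (hx : 0 < x) (s : ℂ) :
    (1 / ((x ^ (-(1:ℝ)/2) : ℝ) : ℂ)) ^ s = ((x:ℝ):ℂ) ^ (s/2) := by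
  have h1 : (1 / ((x ^ (-(1:ℝ)/2) : ℝ) : ℂ)) = (((x ^ ((1:ℝ)/2) : ℝ)) : ℂ) := by
    rw [show (-(1:ℝ)/2) = -(1/2) by ring, Real.rpow_neg hx.le]
    push_cast
    rw [one_div, inv_inv]
  rw [h1, Complex.ofReal_cpow hx.le]
  rw [show (((1:ℝ)/2 : ℝ) : ℂ) = (1/2 : ℂ) by push_cast; ring]
  rw [← Complex.cpow_mul]
  · ring_nf
  · rw [← Complex.ofReal_log hx.le]
    simp [Real.pi_pos]
  · rw [← Complex.ofReal_log hx.le]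
    simp [Real.pi_pos.le]

lemma aux_intG {a t ν q : ℝ} (ha : 0 < a) (ht : 0 < t) (hν : -1 < ν) (hq : 0 ≤ q) :
    IntegrableOn (fun y : ℝ => y ^ ν * Real.exp (-a*y) * (y+t)^q) (Ioi 0) := by
  have h1 : IntegrableOn (fun y : ℝ => y ^ (q+ν) * Real.exp (-a*y)) (Ioi 0) := by
    have := integrableOn_rpow_mul_exp_neg_mul_rpow (p := 1) (s := q+ν) (b := a)
      (by linarith) one_pos ha
    simpa [Real.rpow_one] using this
  have h2 : IntegrableOn (fun y : ℝ => y ^ ν * Real.exp (-a*y)) (Ioi 0) := by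
    have := integrableOn_rpow_mul_exp_neg_mul_rpow (p := 1) (s := ν) (b := a)
      (by linarith) one_pos ha
    simpa [Real.rpow_one] using this
  have hB : IntegrableOn
      (fun y : ℝ => 2^q * (y ^ (q+ν) * Real.exp (-a*y)) + (2^q * t^q) * (y ^ ν * Real.exp (-a*y)))
      (Ioi 0) := (h1.const_mul _).add (h2.const_mul _)
  refine Integrable.mono' hB ?_ ?_
  · apply Measurable.aestronglyMeasurable
    fun_prop
  · filter_upwards [ae_restrict_mem measurableSet_Ioi] with y hy
    have hy0 : (0:ℝ) < y := hy
    have hg0 : 0 ≤ y ^ ν * Real.exp (-a*y) * (y+t)^q := by positivity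
    rw [Real.norm_of_nonneg hg0]
    have hmax : (y+t)^q ≤ 2^q * (y^q + t^q) := by
      calc (y+t)^q ≤ (2 * max y t)^q := by
            apply Real.rpow_le_rpow (by positivity) _ hq
            rcases le_total y t with h | h
            · rw [max_eq_right h]; linarith
            · rw [max_eq_left h]; linarith
        _ = 2^q * (max y t)^q := Real.mul_rpow (by norm_num) (by positivity)
        _ ≤ 2^q * (y^q + t^q) := by
            gcongr 2^q * ?_
            rcases le_total y t with h | h
            · rw [max_eq_right h]
              have : 0 ≤ y^q := by positivity
              linarith
            · rw [max_eq_left h]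
              have : 0 ≤ t^q := by positivity
              linarith
    calc y ^ ν * Real.exp (-a*y) * (y+t)^q
        ≤ y ^ ν * Real.exp (-a*y) * (2^q * (y^q + t^q)) := by
          gcongr
      _ = 2^q * (y^q * y^ν * Real.exp (-a*y)) + (2^q * t^q) * (y ^ ν * Real.exp (-a*y)) := by ring
      _ = 2^q * (y ^ (q+ν) * Real.exp (-a*y)) + (2^q * t^q) * (y ^ ν * Real.exp (-a*y)) := by
          rw [Real.rpow_add hy0]

theorem stmt16 (a t ν : ℝ) (ha : 0 < a) (ht : 0 < t) (hν : -1 < ν) (s : ℂ)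
    (hs : 0 < s.re) :
    mellin (fun z : ℝ =>
        ((∫ y in Set.Ioi (0:ℝ), y ^ ν * Real.exp (-a * y - z * (y + t) ^ (-(1:ℝ)/2)) : ℝ) : ℂ)) s
      = Complex.Gamma s *
          ∫ y in Set.Ioi (0:ℝ),
            ((y ^ ν : ℝ) : ℂ) * ((y + t : ℝ) : ℂ) ^ (s / 2) * (Real.exp (-a * y) : ℂ) := by
  set c : ℝ → ℝ := fun y => (y + t) ^ (-(1:ℝ)/2) with hc_def
  have hc : ∀ y : ℝ, y ∈ Ioi (0:ℝ) → 0 < c y := fun y hy =>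
    Real.rpow_pos_of_pos (by simp at hy; linarith) _
  set F : ℝ → ℝ → ℂ := fun z y =>
    (z:ℂ) ^ (s-1) * ((y ^ ν * Real.exp (-a * y - z * c y) : ℝ) : ℂ) with hF_def
  have hFeq : ∀ z y : ℝ, F z y
      = ((y ^ ν * Real.exp (-a*y) : ℝ) : ℂ) * ((z:ℂ) ^ (s-1) * Complex.exp (-(c y * z))) := by
    intro z y
    simp only [hF_def]
    rw [show -a * y - z * c y = -a*y + -(c y * z) by ring, Real.exp_add]
    push_cast
    ring
  -- integrability on the product
  have key : Integrable (Function.uncurry F)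
      ((volume.restrict (Ioi 0)).prod (volume.restrict (Ioi 0))) := by
    rw [integrable_prod_iff']
    · constructor
      · filter_upwards [ae_restrict_mem measurableSet_Ioi] with y hy
        show Integrable (fun z : ℝ => F z y) (volume.restrict (Ioi 0))
        have : (fun z => F z y) = fun z : ℝ =>
            ((y ^ ν * Real.exp (-a*y) : ℝ) : ℂ) * ((z:ℂ) ^ (s-1) * Complex.exp (-(c y * z))) :=
          funext fun z => hFeq z y
        rw [this]
        exact (aux_int (hc y hy) hs).const_mul _
      · have hG : IntegrableOn
            (fun y : ℝ => y ^ ν * Real.exp (-a*y) * (y+t) ^ (s.re/2) * Real.Gamma s.re)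
            (Ioi 0) := (aux_intG ha ht hν (by positivity)).mul_const _
        refine hG.congr ?_
        filter_upwards [ae_restrict_mem measurableSet_Ioi] with y hy
        have hy0 : (0:ℝ) < y := hy
        have hstep : ∀ z ∈ Ioi (0:ℝ), ‖F z y‖
            = (y ^ ν * Real.exp (-a*y)) * (z ^ (s.re - 1) * Real.exp (-(c y * z))) := by
          intro z hz
          have hx : Complex.exp (-((c y : ℂ) * (z : ℂ))) = ((Real.exp (-(c y * z)) : ℝ) : ℂ) := by
            push_cast
            ring_nf
          rw [hFeq z y, hx, norm_mul, norm_mul,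
            Complex.norm_cpow_eq_rpow_re_of_pos hz, Complex.norm_real, Complex.norm_real,
            Real.norm_of_nonneg (by positivity), Real.norm_of_nonneg (by positivity)]
          simp [Complex.sub_re]
        refine Eq.symm ?_
        calc ∫ z in Ioi (0:ℝ), ‖F z y‖
            = ∫ z in Ioi (0:ℝ),
                (y ^ ν * Real.exp (-a*y)) * (z ^ (s.re - 1) * Real.exp (-(c y * z))) :=
              setIntegral_congr_fun measurableSet_Ioi hstep
          _ = (y ^ ν * Real.exp (-a*y)) *
                ∫ z in Ioi (0:ℝ), z ^ (s.re - 1) * Real.exp (-(c y * z)) :=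
              integral_const_mul _ _
          _ = (y ^ ν * Real.exp (-a*y)) * ((1 / c y) ^ s.re * Real.Gamma s.re) := by
              rw [Real.integral_rpow_mul_exp_neg_mul_Ioi hs (hc y hy)]
          _ = y ^ ν * Real.exp (-a*y) * (y+t) ^ (s.re/2) * Real.Gamma s.re := by
              rw [hc_def]
              rw [aux_rpow (by linarith) s.re]
              ring
    · apply Measurable.aestronglyMeasurable
      apply Measurable.mul
      · fun_prop
      · apply Complex.measurable_ofReal.comp
        fun_prop
  -- main computation
  calc mellin (fun z : ℝ =>
        ((∫ y in Ioi (0:ℝ), y ^ ν * Real.exp (-a * y - z * c y) : ℝ) : ℂ)) s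
      = ∫ z in Ioi (0:ℝ), ∫ y in Ioi (0:ℝ), F z y := by
        simp only [mellin, smul_eq_mul]
        refine setIntegral_congr_fun measurableSet_Ioi fun z _ => ?_
        have h : (∫ y in Ioi (0:ℝ), ((y ^ ν * Real.exp (-a * y - z * c y) : ℝ) : ℂ))
            = ((∫ y in Ioi (0:ℝ), y ^ ν * Real.exp (-a * y - z * c y) : ℝ) : ℂ) :=
          integral_ofReal
        rw [← h, ← integral_const_mul]
    _ = ∫ y in Ioi (0:ℝ), ∫ z in Ioi (0:ℝ), F z y := integral_integral_swap key
    _ = ∫ y in Ioi (0:ℝ),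
          Complex.Gamma s * (((y ^ ν : ℝ) : ℂ) * ((y + t : ℝ) : ℂ) ^ (s / 2)
            * (Real.exp (-a * y) : ℂ)) := by
        refine setIntegral_congr_fun measurableSet_Ioi fun y hy => ?_
        have hy0 : (0:ℝ) < y := hy
        calc ∫ z in Ioi (0:ℝ), F z y
            = ∫ z in Ioi (0:ℝ), ((y ^ ν * Real.exp (-a*y) : ℝ) : ℂ)
                * ((z:ℂ) ^ (s-1) * Complex.exp (-(c y * z))) :=
              setIntegral_congr_fun measurableSet_Ioi fun z _ => hFeq z y
          _ = ((y ^ ν * Real.exp (-a*y) : ℝ) : ℂ)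
                * ∫ z in Ioi (0:ℝ), (z:ℂ) ^ (s-1) * Complex.exp (-((c y : ℂ) * z)) := by
              rw [integral_const_mul]
          _ = ((y ^ ν * Real.exp (-a*y) : ℝ) : ℂ) * ((1 / (c y : ℂ)) ^ s * Complex.Gamma s) := by
              rw [Complex.integral_cpow_mul_exp_neg_mul_Ioi hs (hc y hy)]
          _ = Complex.Gamma s * (((y ^ ν : ℝ) : ℂ) * ((y + t : ℝ) : ℂ) ^ (s / 2)
                * (Real.exp (-a * y) : ℂ)) := by
              rw [hc_def, aux_cpow (by linarith) s]
              push_cast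
              ring
    _ = Complex.Gamma s *
          ∫ y in Ioi (0:ℝ),
            ((y ^ ν : ℝ) : ℂ) * ((y + t : ℝ) : ℂ) ^ (s / 2) * (Real.exp (-a * y) : ℂ) :=
        integral_const_mul _ _
end
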